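/- Consider the Bayesian game with players P = {1,2,3}, types and actions T_i = A_i = {0,1}, type profiles drawn uniformly from {(t_1,t_2,t_3) : t_1+t_2+t_3 odd}, and utility 1 for every player if a_1+a_2+a_3 is odd and 0 otherwise. Then: (i) the marginal type distribution of each player is uniform on {0,1} and the types are pairwise independent; (ii) the strategy profile τ where each player plays her own type yields expected utility 1 for every player and is a Nash equilibrium; (iii) the strategy profile σ where each player plays 0 or 1 uniformly at random independently of her type yields expected utility 1/2 for every player and is a Nash equilibrium. -/

import Mathlib

open Finset

/-- The prior over type profiles: uniform over the four profiles `(t₁,t₂,t₃)` with odd sum. -/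
noncomputable def oddPrior (t : Fin 3 → Bool) : ℝ :=
  if xor (t 0) (xor (t 1) (t 2)) then 1 / 4 else 0

/-- Every player gets utility 1 if `a₁ + a₂ + a₃` is odd, and 0 otherwise. -/
def oddU (a : Fin 3 → Bool) : ℝ :=
  if xor (a 0) (xor (a 1) (a 2)) then 1 else 0

/-- Expected utility of player `i` when each player `j` of type `t` plays action `a` with
probability `s j t a`. -/
noncomputable def oddEU (s : Fin 3 → Bool → Bool → ℝ) (i : Fin 3) : ℝ :=
  ∑ t : Fin 3 → Bool, oddPrior t *
    ∑ a : Fin 3 → Bool, (∏ j, s j (t j) (a j)) * oddU a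

/-- A behavioral strategy: a distribution over the two actions for each type. -/
def IsStrat (s : Bool → Bool → ℝ) : Prop :=
  ∀ t, (∀ a, 0 ≤ s t a) ∧ s t false + s t true = 1

/-- Each player plays her own type. -/
def τtype : Fin 3 → Bool → Bool → ℝ := fun _ t a => if a = t then 1 else 0

/-- Each player plays uniformly at random, independently of her type. -/
noncomputable def σunif : Fin 3 → Bool → Bool → ℝ := fun _ _ _ => 1 / 2

def e3aux : (Fin 3 → Bool) ≃ Bool × Bool × Bool where
  toFun t := (t 0, t 1, t 2)
  invFun p := ![p.1, p.2.1, p.2.2]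
  left_inv t := by funext i; fin_cases i <;> rfl
  right_inv p := rfl

lemma sum3aux (f : (Fin 3 → Bool) → ℝ) :
    ∑ t, f t = ∑ p : Bool × Bool × Bool, f ![p.1, p.2.1, p.2.2] :=
  (Fintype.sum_equiv e3aux.symm (fun p => f ![p.1, p.2.1, p.2.2]) f (fun _ => rfl)).symm

lemma oddEU_expand (s : Fin 3 → Bool → Bool → ℝ) (i : Fin 3) :
    oddEU s i = ∑ p : Bool × Bool × Bool, oddPrior ![p.1, p.2.1, p.2.2] *
      ∑ q : Bool × Bool × Bool,
        (s 0 p.1 q.1 * (s 1 p.2.1 q.2.1 * s 2 p.2.2 q.2.2)) * oddU ![q.1, q.2.1, q.2.2] := by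
  rw [oddEU, sum3aux]
  refine Finset.sum_congr rfl fun p _ => ?_
  rw [sum3aux]
  refine congrArg _ (Finset.sum_congr rfl fun q _ => ?_)
  rw [Fin.prod_univ_three]
  exact congrArg (· * _) (mul_assoc _ _ _)

set_option maxHeartbeats 1000000 in
theorem stmt19 :
    -- (i) marginals are uniform and types are pairwise independent
    ((∀ (i : Fin 3) (b : Bool),
        (∑ t : Fin 3 → Bool, if t i = b then oddPrior t else 0) = 1 / 2) ∧
      (∀ i j : Fin 3, i ≠ j → ∀ b c : Bool,
        (∑ t : Fin 3 → Bool, if t i = b ∧ t j = c then oddPrior t else 0) = 1 / 4)) ∧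
    -- (ii) playing one's own type gives expected utility 1 and is a Nash equilibrium
    ((∀ i : Fin 3, oddEU τtype i = 1) ∧
      (∀ (i : Fin 3) (s' : Bool → Bool → ℝ), IsStrat s' →
        oddEU (Function.update τtype i s') i ≤ oddEU τtype i)) ∧
    -- (iii) playing uniformly gives expected utility 1/2 and is a Nash equilibrium
    ((∀ i : Fin 3, oddEU σunif i = 1 / 2) ∧
      (∀ (i : Fin 3) (s' : Bool → Bool → ℝ), IsStrat s' →
        oddEU (Function.update σunif i s') i ≤ oddEU σunif i)) := by

  refine ⟨⟨fun i b => ?_, fun i j hij b c => ?_⟩, ⟨fun i => ?_, fun i s' h => ?_⟩,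
    ⟨fun i => ?_, fun i s' h => ?_⟩⟩
  · rw [sum3aux]
    fin_cases i <;> cases b <;>
      simp [Fintype.sum_prod_type, oddPrior] <;> norm_num
  · rw [sum3aux]
    fin_cases i <;> fin_cases j <;> first
      | exact absurd rfl hij
      | (cases b <;> cases c <;>
          simp [Fintype.sum_prod_type, oddPrior] <;> norm_num)
  · rw [oddEU_expand]
    simp [Fintype.sum_prod_type, oddPrior, oddU, τtype]
    norm_num
  · obtain ⟨hf0, hfs⟩ := h false
    obtain ⟨ht0, hts⟩ := h true
    fin_cases i <;>
      rw [oddEU_expand, oddEU_expand] <;>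
      simp [Fintype.sum_prod_type, oddPrior, oddU, τtype, Function.update, Fin.ext_iff] <;>
      nlinarith [hf0 false, hf0 true, ht0 false, ht0 true]
  · rw [oddEU_expand]
    simp [Fintype.sum_prod_type, oddPrior, oddU, σunif]
    norm_num
  · obtain ⟨hf0, hfs⟩ := h false
    obtain ⟨ht0, hts⟩ := h true
    fin_cases i <;>
      rw [oddEU_expand, oddEU_expand] <;>
      simp [Fintype.sum_prod_type, oddPrior, oddU, σunif, Function.update, Fin.ext_iff] <;>
      nlinarith [hf0 false, hf0 true, ht0 false, ht0 true]
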